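/- Let G be a Garside group with Garside element Δ and let y ∈ G be absorbable (inf(y) = 0 or sup(y) = 0, and there exists x with inf(xy) = inf(x) and sup(xy) = sup(x)). Then y^{-1} is also absorbable. -/

import Mathlib

/-- A Garside structure on a group `G`: a submonoid `pos` of positive elements with
`pos ∩ pos⁻¹ = {1}`, a Garside element `Δ ∈ pos` with `Δ⁻¹ pos Δ = pos`, together
with the infimum and supremum functions determined by the prefix order
`a ≼ b ↔ a⁻¹b ∈ pos`: `ginf x = max {p : Δᵖ ≼ x}` and `gsup x = min {p : x ≼ Δᵖ}`. -/
structure GarsideStructure (G : Type*) [Group G] where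
  pos : Submonoid G
  Δ : G
  delta_pos : Δ ∈ pos
  inter_trivial : ∀ a : G, a ∈ pos → a⁻¹ ∈ pos → a = 1
  conj_mem : ∀ a : G, a ∈ pos → Δ⁻¹ * a * Δ ∈ pos
  conj_mem' : ∀ a : G, a ∈ pos → Δ * a * Δ⁻¹ ∈ pos
  ginf : G → ℤ
  gsup : G → ℤ
  ginf_spec : ∀ (x : G) (p : ℤ), ((Δ ^ p)⁻¹ * x ∈ pos ↔ p ≤ ginf x)
  gsup_spec : ∀ (x : G) (p : ℤ), (x⁻¹ * Δ ^ p ∈ pos ↔ gsup x ≤ p)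

/-- `y` is absorbable if `inf(y) = 0` or `sup(y) = 0`, and some `x` absorbs `y`,
i.e. `inf(xy) = inf(x)` and `sup(xy) = sup(x)`. -/
def GarsideStructure.Absorbable {G : Type*} [Group G] (S : GarsideStructure G)
    (y : G) : Prop :=
  (S.ginf y = 0 ∨ S.gsup y = 0) ∧
    ∃ x : G, S.ginf (x * y) = S.ginf x ∧ S.gsup (x * y) = S.gsup x

lemma GarsideStructure.conj_zpow {G : Type*} [Group G] (S : GarsideStructure G)
    (k : ℤ) (a : G) (ha : a ∈ S.pos) : S.Δ ^ k * a * (S.Δ ^ k)⁻¹ ∈ S.pos := by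
  induction k using Int.induction_on with
  | zero => simpa using ha
  | succ n ih =>
      have := S.conj_mem' _ ih
      have h : S.Δ ^ ((n : ℤ) + 1) * a * (S.Δ ^ ((n : ℤ) + 1))⁻¹ =
          S.Δ * (S.Δ ^ (n : ℤ) * a * (S.Δ ^ (n : ℤ))⁻¹) * S.Δ⁻¹ := by
        rw [zpow_add, zpow_one]; group
      rw [h]; exact this
  | pred n ih =>
      have := S.conj_mem _ ih
      have h : S.Δ ^ (-(n : ℤ) - 1) * a * (S.Δ ^ (-(n : ℤ) - 1))⁻¹ =
          S.Δ⁻¹ * (S.Δ ^ (-(n : ℤ)) * a * (S.Δ ^ (-(n : ℤ)))⁻¹) * S.Δ := by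
        rw [sub_eq_add_neg, zpow_add, zpow_neg_one]; group
      rw [h]; exact this

lemma GarsideStructure.ginf_inv {G : Type*} [Group G] (S : GarsideStructure G)
    (y : G) : S.ginf y⁻¹ = -S.gsup y := by
  have key : ∀ p : ℤ, p ≤ S.ginf y⁻¹ ↔ S.gsup y ≤ -p := by
    intro p
    rw [← S.ginf_spec, ← S.gsup_spec]
    constructor
    · intro h
      have := S.conj_zpow p _ h
      have he : S.Δ ^ p * ((S.Δ ^ p)⁻¹ * y⁻¹) * (S.Δ ^ p)⁻¹ = y⁻¹ * S.Δ ^ (-p) := by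
        rw [zpow_neg]; group
      rwa [he] at this
    · intro h
      have := S.conj_zpow (-p) _ h
      have he : S.Δ ^ (-p) * (y⁻¹ * S.Δ ^ (-p)) * (S.Δ ^ (-p))⁻¹ =
          (S.Δ ^ p)⁻¹ * y⁻¹ * (S.Δ ^ (-p) * (S.Δ ^ (-p))⁻¹) := by
        rw [zpow_neg]; group
      rw [he, mul_inv_cancel, mul_one] at this
      exact this
  have h1 : S.gsup y ≤ -S.ginf y⁻¹ := (key _).mp le_rfl
  have h2 : -S.gsup y ≤ S.ginf y⁻¹ := (key (-S.gsup y)).mpr (by omega)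
  omega

lemma GarsideStructure.gsup_inv {G : Type*} [Group G] (S : GarsideStructure G)
    (y : G) : S.gsup y⁻¹ = -S.ginf y := by
  have := S.ginf_inv y⁻¹
  rw [inv_inv] at this
  omega

/-- Calvez–Wiest: the inverse of an absorbable element is absorbable. -/
theorem absorbable_inv {G : Type*} [Group G] (S : GarsideStructure G) (y : G)
    (hy : S.Absorbable y) : S.Absorbable y⁻¹ := by
  obtain ⟨h1, x, hinf, hsup⟩ := hy
  refine ⟨?_, ⟨x * y, ?_, ?_⟩⟩
  · rw [S.ginf_inv, S.gsup_inv]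
    omega
  · rw [mul_inv_cancel_right, hinf]
  · rw [mul_inv_cancel_right, hsup]
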